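/- arXiv:1804.07711 — 3 statements merged into one kernel-verified Lean document; each statement's English description precedes it below -/
import Mathlib

section
/- The asymptotics of the number of type-I triangulations of the p-gon with n inner vertices: #T_{n,p} = (p(2p)!/(p!)^2) · (4^{n-1}(2p+3n-5)!!)/(n!(2p+n-1)!!) satisfies #T_{n,p} ~ c(p) λ_c^{-n} n^{-5/2} as n → ∞, where λ_c = 1/(12√3) and c(p) = 3^{p-2} p (2p)! / (4√(2π) (p!)^2). -/
open Filter Real

/-- Number of type-I triangulations of the `p`-gon with `n` inner vertices (as a real). -/
noncomputable def numTri (n p : ℕ) : ℝ :=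
  ((p : ℝ) * (Nat.factorial (2*p) : ℝ) / (Nat.factorial p : ℝ)^2) *
    ((4 : ℝ)^(n-1) * (Nat.doubleFactorial (2*p + 3*n - 5) : ℝ)) /
    ((Nat.factorial n : ℝ) * (Nat.doubleFactorial (2*p + n - 1) : ℝ))

/-- The constant `c(p) = 3^{p-2} p (2p)! / (4√(2π) (p!)²)`. -/
noncomputable def cAsym (p : ℕ) : ℝ :=
  (3 : ℝ) ^ ((p : ℤ) - 2) * (p : ℝ) * (Nat.factorial (2*p) : ℝ) /
    (4 * Real.sqrt (2 * Real.pi) * (Nat.factorial p : ℝ)^2)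

lemma df_odd (m : ℕ) : ((Nat.doubleFactorial (2*m+1) : ℕ) : ℝ) =
    (Nat.factorial (2*m+1) : ℝ) / (2^m * (Nat.factorial m : ℝ)) := by
  have h := Nat.factorial_eq_mul_doubleFactorial (2*m)
  rw [Nat.doubleFactorial_two_mul] at h
  have h2 : ((Nat.factorial (2*m+1) : ℕ) : ℝ)
      = (Nat.doubleFactorial (2*m+1) : ℝ) * (2^m * (Nat.factorial m : ℝ)) := by
    exact_mod_cast congrArg (Nat.cast (R := ℝ)) h
  have hne : (2:ℝ)^m * (Nat.factorial m : ℝ) ≠ 0 := by positivity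
  field_simp [h2]
  rw [h2]; ring

lemma df_even (m : ℕ) : ((Nat.doubleFactorial (2*m) : ℕ) : ℝ) =
    2^m * (Nat.factorial m : ℝ) := by
  exact_mod_cast congrArg (Nat.cast (R := ℝ)) (Nat.doubleFactorial_two_mul m)

lemma tendsto_even_odd {u : ℕ → ℝ} {l : ℝ}
    (he : Tendsto (fun k => u (2*k)) atTop (nhds l))
    (ho : Tendsto (fun k => u (2*k+1)) atTop (nhds l)) :
    Tendsto u atTop (nhds l) := by
  rw [Metric.tendsto_atTop] at he ho ⊢
  intro ε hε
  obtain ⟨N1, h1⟩ := he ε hε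
  obtain ⟨N2, h2⟩ := ho ε hε
  refine ⟨2*N1 + 2*N2 + 1, fun n hn => ?_⟩
  rcases Nat.even_or_odd n with ⟨k, hk⟩ | ⟨k, hk⟩
  · have : u n = u (2*k) := by rw [hk]; ring_nf
    rw [hk.trans (by ring : k + k = 2*k)]
    exact h1 k (by omega)
  · rw [hk]
    exact h2 k (by omega)

lemma tendsto_u (c : ℕ) :
    Tendsto (fun m : ℕ => ((Nat.factorial (m+c) : ℝ)) / ((Nat.factorial m : ℝ) * (m:ℝ)^c))
      atTop (nhds 1) := by
  induction c with
  | zero =>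
      simp only [Nat.add_zero, pow_zero, mul_one]
      refine Tendsto.congr' ?_ tendsto_const_nhds
      filter_upwards [eventually_ge_atTop 1] with m hm
      have : (Nat.factorial m : ℝ) ≠ 0 := by positivity
      field_simp
  | succ c ih =>
      have h1 : Tendsto (fun m : ℕ => 1 + ((c:ℝ)+1) * (1/(m:ℝ))) atTop (nhds 1) := by
        have := (tendsto_one_div_atTop_nhds_zero_nat : Tendsto (fun n : ℕ => 1/(n:ℝ)) atTop (nhds 0))
        have h2 := (this.const_mul ((c:ℝ)+1)).const_add 1
        simpa using h2
      have := ih.mul h1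
      rw [mul_one] at this
      refine Tendsto.congr' ?_ this
      filter_upwards [eventually_ge_atTop 1] with m hm
      have hm0 : (0:ℝ) < (m:ℝ) := by exact_mod_cast hm
      have hfac : (Nat.factorial m : ℝ) ≠ 0 := by positivity
      have hkey : (Nat.factorial (m + (c+1)) : ℝ) = (Nat.factorial (m+c) : ℝ) * ((m:ℝ)+c+1) := by
        have : m + (c+1) = (m + c) + 1 := by omega
        rw [this, Nat.factorial_succ]
        push_cast; ring
      rw [hkey]
      field_simp
      ring

lemma tendsto_u_comp (c a : ℕ) (ha : 1 ≤ a) :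
    Tendsto (fun k : ℕ => ((Nat.factorial (a*k+c) : ℝ)) /
      ((Nat.factorial (a*k) : ℝ) * ((a*k : ℕ):ℝ)^c)) atTop (nhds 1) := by
  have hmono : StrictMono (fun k : ℕ => a*k) := fun x y h => by
    simp only; exact mul_lt_mul_of_pos_left h (by omega : 0 < a)
  exact (tendsto_u c).comp hmono.tendsto_atTop

lemma tendsto_st_comp (a : ℕ) (ha : 1 ≤ a) :
    Tendsto (fun k : ℕ => Stirling.stirlingSeq (a*k)) atTop (nhds (Real.sqrt Real.pi)) := by
  have hmono : StrictMono (fun k : ℕ => a*k) := fun x y h => by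
    simp only; exact mul_lt_mul_of_pos_left h (by omega : 0 < a)
  exact Stirling.tendsto_stirlingSeq_sqrt_pi.comp hmono.tendsto_atTop

lemma tendsto_V (c : ℕ) (hc : 1 ≤ c) :
    Tendsto (fun k : ℕ => (((2*k+c : ℕ):ℝ)/((2*k : ℕ):ℝ))^((5:ℝ)/2)) atTop (nhds 1) := by
  have h1 : Tendsto (fun k : ℕ => ((2*(k:ℝ)+c)/(2*(k:ℝ)))) atTop (nhds 1) := by
    have h0 := (tendsto_one_div_atTop_nhds_zero_nat : Tendsto (fun n : ℕ => 1/(n:ℝ)) atTop (nhds 0))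
    have h2 := (h0.const_mul ((c:ℝ)/2)).const_add 1
    rw [mul_zero, add_zero] at h2
    refine Tendsto.congr' ?_ h2
    filter_upwards [eventually_ge_atTop 1] with m hm
    have hm0 : (0:ℝ) < (m:ℝ) := by exact_mod_cast hm
    field_simp
    try ring
  have h3 : Tendsto (fun k : ℕ => ((2*(k:ℝ)+c)/(2*(k:ℝ)))^((5:ℝ)/2)) atTop (nhds (1^((5:ℝ)/2))) :=
    h1.rpow_const (Or.inl one_ne_zero)
  rw [Real.one_rpow] at h3
  refine Tendsto.congr (fun k => ?_) h3
  push_cast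
  try ring_nf

set_option maxHeartbeats 4000000 in
lemma key_even (p k : ℕ) (hp : 1 ≤ p) (hk : 1 ≤ k) :
    numTri (2*k+6) p /
      (cAsym p * (12 * Real.sqrt 3)^(2*k+6) * (((2*k+6 : ℕ)) : ℝ) ^ (-(5/2) : ℝ)) =
    ((Nat.factorial (6*k+(2*p+13)) : ℝ) / ((Nat.factorial (6*k) : ℝ) * ((6*k : ℕ):ℝ)^(2*p+13))
      * ((Nat.factorial (k+(p+2)) : ℝ) / ((Nat.factorial k : ℝ) * (k:ℝ)^(p+2)))
      / ((Nat.factorial (3*k+(p+6)) : ℝ) / ((Nat.factorial (3*k) : ℝ) * ((3*k : ℕ):ℝ)^(p+6))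
        * ((Nat.factorial (2*k+6) : ℝ) / ((Nat.factorial (2*k) : ℝ) * ((2*k : ℕ):ℝ)^6))
        * ((Nat.factorial (2*k+(2*p+5)) : ℝ) / ((Nat.factorial (2*k) : ℝ) * ((2*k : ℕ):ℝ)^(2*p+5))))) *
    (Stirling.stirlingSeq (6*k) * Stirling.stirlingSeq k /
      (Stirling.stirlingSeq (3*k) * Stirling.stirlingSeq (2*k) * Stirling.stirlingSeq (2*k))) *
    ((((2*k+6 : ℕ):ℝ)/((2*k : ℕ):ℝ))^((5:ℝ)/2)) * Real.sqrt Real.pi := by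
  have hk0 : (0:ℝ) < (k:ℝ) := by exact_mod_cast hk
  have ha0 : (0:ℝ) < ((2*k+6 : ℕ):ℝ) := by
    have : 0 < 2*k+6 := by omega
    exact_mod_cast this
  have hb0 : (0:ℝ) < ((2*k : ℕ):ℝ) := by
    have : 0 < 2*k := by omega
    exact_mod_cast this
  have hsplit : ∀ x : ℝ, 0 < x → x^((5:ℝ)/2) = x^2 * Real.sqrt x := by
    intro x hx
    rw [Real.sqrt_eq_rpow, ← Real.rpow_natCast x 2, ← Real.rpow_add hx]
    norm_num
  have e1 : 2*p + 3*(2*k+6) - 5 = 2*(p+3*k+6)+1 := by omega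
  have e2 : 2*p + (2*k+6) - 1 = 2*(p+k+2)+1 := by omega
  have e3 : 2*k+6 - 1 = 2*k+5 := by omega
  have h3z : (3:ℝ)^((p:ℤ)-2) = 3^p/9 := by
    rw [zpow_sub₀ (by norm_num : (3:ℝ) ≠ 0), zpow_natCast]
    norm_num
  have h12 : (12*Real.sqrt 3)^(2*k+6) = (2:ℝ)^(4*(k+3))*3^(3*(k+3)) := by
    rw [show 2*k+6 = 2*(k+3) from by ring, pow_mul,
      show ((12:ℝ)*Real.sqrt 3)^2 = 2^4*3^3 from by
        rw [mul_pow, Real.sq_sqrt (by norm_num : (0:ℝ) ≤ 3)]; norm_num,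
      mul_pow, ← pow_mul, ← pow_mul]
  unfold numTri cAsym
  rw [e1, e2, e3, df_odd, df_odd, h3z, h12,
    Real.div_rpow ha0.le hb0.le, Real.rpow_neg ha0.le,
    hsplit _ ha0, hsplit _ hb0]
  simp only [Stirling.stirlingSeq]
  generalize hE : Real.exp 1 = E
  have hE0 : E ≠ 0 := hE ▸ Real.exp_ne_zero 1
  rw [show 2*(p+3*k+6)+1 = 6*k+(2*p+13) from by omega,
    show 2*(p+k+2)+1 = 2*k+(2*p+5) from by omega,
    show p+3*k+6 = 3*k+(p+6) from by omega,
    show p+k+2 = k+(p+2) from by omega]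
  push_cast
  have hks : (k:ℝ) = (Real.sqrt (k:ℝ))^2 := (Real.sq_sqrt hk0.le).symm
  set s : ℝ := Real.sqrt (k:ℝ) with hsdef
  have hs0 : 0 < s := Real.sqrt_pos.mpr hk0
  rw [hks]
  have hq3 : Real.sqrt 3 ^ 2 = 3 := Real.sq_sqrt (by norm_num)
  have hq2 : Real.sqrt 2 ^ 2 = 2 := Real.sq_sqrt (by norm_num)
  have hh1 : Real.sqrt (2*(6*s^2)) = 2*Real.sqrt 3*s := by
    have h : (2*Real.sqrt 3*s)^2 = 2*(6*s^2) := by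
      rw [mul_pow, mul_pow, hq3]; ring
    rw [← h, Real.sqrt_sq (by positivity)]
  have hh2 : Real.sqrt (2*(3*s^2)) = Real.sqrt 2*Real.sqrt 3*s := by
    have h : (Real.sqrt 2*Real.sqrt 3*s)^2 = 2*(3*s^2) := by
      rw [mul_pow, mul_pow, hq2, hq3]; ring
    rw [← h, Real.sqrt_sq (by positivity)]
  have hh3 : Real.sqrt (2*(2*s^2)) = 2*s := by
    have h : (2*s)^2 = 2*(2*s^2) := by ring
    rw [← h, Real.sqrt_sq (by positivity)]
  have hh4 : Real.sqrt (2*s^2) = Real.sqrt 2*s := by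
    have h : (Real.sqrt 2*s)^2 = 2*s^2 := by
      rw [mul_pow, hq2]
    rw [← h, Real.sqrt_sq (by positivity)]
  have hh5 : Real.sqrt (2*Real.pi) = Real.sqrt 2*Real.sqrt Real.pi :=
    Real.sqrt_mul (by norm_num) _
  rw [hh1, hh2, hh3, hh4, hh5]
  simp only [div_pow]
  have P2 : ∀ (x:ℝ) (m:ℕ), (2*x)^m = 2^m*x^m := fun x m => mul_pow 2 x m
  have P3 : ∀ (x:ℝ) (m:ℕ), (3*x)^m = 3^m*x^m := fun x m => mul_pow 3 x m
  have P6 : ∀ (x:ℝ) (m:ℕ), (6*x)^m = 2^m*(3^m*x^m) := by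
    intro x m
    rw [show (6:ℝ)*x = 2*(3*x) from by ring, mul_pow, mul_pow]
  have P4 : ∀ m:ℕ, (4:ℝ)^m = 2^m*2^m := by
    intro m
    rw [show (4:ℝ) = 2*2 from by norm_num, mul_pow]
  simp only [P6, P3, P2, P4]
  have hF : ∀ m : ℕ, (Nat.factorial m : ℝ) ≠ 0 :=
    fun m => Nat.cast_ne_zero.mpr (Nat.factorial_ne_zero m)
  have hp0 : ((p:ℝ)) ≠ 0 := by positivity
  have hqpi : Real.sqrt Real.pi ≠ 0 := by positivity
  have hq2' : Real.sqrt 2 ≠ 0 := by positivity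
  have hq3' : Real.sqrt 3 ≠ 0 := by positivity
  have hs' : s ≠ 0 := ne_of_gt hs0
  have hA : Real.sqrt (2*s^2+6) ≠ 0 := by positivity
  field_simp
  ring_nf
  rw [hq2]
  ring

lemma key_odd (p k : ℕ) (hp : 1 ≤ p) (hk : 1 ≤ k) :
    numTri (2*k+7) p /
      (cAsym p * (12 * Real.sqrt 3)^(2*k+7) * (((2*k+7 : ℕ)) : ℝ) ^ (-(5/2) : ℝ)) =
    ((Nat.factorial (3*k+(p+8)) : ℝ) / ((Nat.factorial (3*k) : ℝ) * ((3*k : ℕ):ℝ)^(p+8))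
      / ((Nat.factorial (k+(p+3)) : ℝ) / ((Nat.factorial k : ℝ) * (k:ℝ)^(p+3))
        * ((Nat.factorial (2*k+7) : ℝ) / ((Nat.factorial (2*k) : ℝ) * ((2*k : ℕ):ℝ)^7)))) *
    (Stirling.stirlingSeq (3*k) /
      (Stirling.stirlingSeq k * Stirling.stirlingSeq (2*k))) *
    ((((2*k+7 : ℕ):ℝ)/((2*k : ℕ):ℝ))^((5:ℝ)/2)) * Real.sqrt Real.pi := by
  have hk0 : (0:ℝ) < (k:ℝ) := by exact_mod_cast hk
  have ha0 : (0:ℝ) < ((2*k+7 : ℕ):ℝ) := by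
    have : 0 < 2*k+7 := by omega
    exact_mod_cast this
  have hb0 : (0:ℝ) < ((2*k : ℕ):ℝ) := by
    have : 0 < 2*k := by omega
    exact_mod_cast this
  have hsplit : ∀ x : ℝ, 0 < x → x^((5:ℝ)/2) = x^2 * Real.sqrt x := by
    intro x hx
    rw [Real.sqrt_eq_rpow, ← Real.rpow_natCast x 2, ← Real.rpow_add hx]
    norm_num
  have e1 : 2*p + 3*(2*k+7) - 5 = 2*(p+3*k+8) := by omega
  have e2 : 2*p + (2*k+7) - 1 = 2*(p+k+3) := by omega
  have e3 : 2*k+7 - 1 = 2*k+6 := by omega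
  have h3z : (3:ℝ)^((p:ℤ)-2) = 3^p/9 := by
    rw [zpow_sub₀ (by norm_num : (3:ℝ) ≠ 0), zpow_natCast]
    norm_num
  have h12 : (12*Real.sqrt 3)^(2*k+7) = (2:ℝ)^(4*(k+3))*3^(3*(k+3))*(12*Real.sqrt 3) := by
    rw [show 2*k+7 = 2*(k+3)+1 from by ring, pow_succ, pow_mul,
      show ((12:ℝ)*Real.sqrt 3)^2 = 2^4*3^3 from by
        rw [mul_pow, Real.sq_sqrt (by norm_num : (0:ℝ) ≤ 3)]; norm_num,
      mul_pow, ← pow_mul, ← pow_mul]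
  unfold numTri cAsym
  rw [e1, e2, e3, df_even, df_even, h3z, h12,
    Real.div_rpow ha0.le hb0.le, Real.rpow_neg ha0.le,
    hsplit _ ha0, hsplit _ hb0]
  simp only [Stirling.stirlingSeq]
  generalize hE : Real.exp 1 = E
  have hE0 : E ≠ 0 := hE ▸ Real.exp_ne_zero 1
  rw [show p+3*k+8 = 3*k+(p+8) from by omega,
    show p+k+3 = k+(p+3) from by omega]
  push_cast
  have hks : (k:ℝ) = (Real.sqrt (k:ℝ))^2 := (Real.sq_sqrt hk0.le).symm
  set s : ℝ := Real.sqrt (k:ℝ) with hsdef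
  have hs0 : 0 < s := Real.sqrt_pos.mpr hk0
  rw [hks]
  have hq3 : Real.sqrt 3 ^ 2 = 3 := Real.sq_sqrt (by norm_num)
  have hq2 : Real.sqrt 2 ^ 2 = 2 := Real.sq_sqrt (by norm_num)
  have hh2 : Real.sqrt (2*(3*s^2)) = Real.sqrt 2*Real.sqrt 3*s := by
    have h : (Real.sqrt 2*Real.sqrt 3*s)^2 = 2*(3*s^2) := by
      rw [mul_pow, mul_pow, hq2, hq3]; ring
    rw [← h, Real.sqrt_sq (by positivity)]
  have hh3 : Real.sqrt (2*(2*s^2)) = 2*s := by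
    have h : (2*s)^2 = 2*(2*s^2) := by ring
    rw [← h, Real.sqrt_sq (by positivity)]
  have hh4 : Real.sqrt (2*s^2) = Real.sqrt 2*s := by
    have h : (Real.sqrt 2*s)^2 = 2*s^2 := by
      rw [mul_pow, hq2]
    rw [← h, Real.sqrt_sq (by positivity)]
  have hh5 : Real.sqrt (2*Real.pi) = Real.sqrt 2*Real.sqrt Real.pi :=
    Real.sqrt_mul (by norm_num) _
  rw [hh2, hh3, hh4, hh5]
  simp only [div_pow]
  have P2 : ∀ (x:ℝ) (m:ℕ), (2*x)^m = 2^m*x^m := fun x m => mul_pow 2 x m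
  have P3 : ∀ (x:ℝ) (m:ℕ), (3*x)^m = 3^m*x^m := fun x m => mul_pow 3 x m
  have P6 : ∀ (x:ℝ) (m:ℕ), (6*x)^m = 2^m*(3^m*x^m) := by
    intro x m
    rw [show (6:ℝ)*x = 2*(3*x) from by ring, mul_pow, mul_pow]
  have P4 : ∀ m:ℕ, (4:ℝ)^m = 2^m*2^m := by
    intro m
    rw [show (4:ℝ) = 2*2 from by norm_num, mul_pow]
  simp only [P6, P3, P2, P4]
  have hF : ∀ m : ℕ, (Nat.factorial m : ℝ) ≠ 0 :=
    fun m => Nat.cast_ne_zero.mpr (Nat.factorial_ne_zero m)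
  have hp0 : ((p:ℝ)) ≠ 0 := by positivity
  have hqpi : Real.sqrt Real.pi ≠ 0 := by positivity
  have hq2' : Real.sqrt 2 ≠ 0 := by positivity
  have hq3' : Real.sqrt 3 ≠ 0 := by positivity
  have hs' : s ≠ 0 := ne_of_gt hs0
  have hA : Real.sqrt (2*s^2+7) ≠ 0 := by positivity
  field_simp
  ring_nf
  rw [hq2]
  ring

/-- `#T_{n,p} ~ c(p) λ_c^{-n} n^{-5/2}` as `n → ∞`, with `λ_c = 1/(12√3)`. -/
theorem stmt_2 (p : ℕ) (hp : 1 ≤ p) :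
    Filter.Tendsto
      (fun n : ℕ =>
        numTri n p / (cAsym p * (12 * Real.sqrt 3)^n * (n : ℝ) ^ (-(5/2) : ℝ)))
      Filter.atTop (nhds 1) := by
  have hpi : (0:ℝ) < Real.sqrt Real.pi := Real.sqrt_pos.mpr Real.pi_pos
  apply tendsto_even_odd
  · rw [← Filter.tendsto_add_atTop_iff_nat 3]
    have HE : Tendsto (fun k : ℕ =>
      ((Nat.factorial (6*k+(2*p+13)) : ℝ) / ((Nat.factorial (6*k) : ℝ) * ((6*k : ℕ):ℝ)^(2*p+13))
      * ((Nat.factorial (k+(p+2)) : ℝ) / ((Nat.factorial k : ℝ) * (k:ℝ)^(p+2)))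
      / ((Nat.factorial (3*k+(p+6)) : ℝ) / ((Nat.factorial (3*k) : ℝ) * ((3*k : ℕ):ℝ)^(p+6))
        * ((Nat.factorial (2*k+6) : ℝ) / ((Nat.factorial (2*k) : ℝ) * ((2*k : ℕ):ℝ)^6))
        * ((Nat.factorial (2*k+(2*p+5)) : ℝ) / ((Nat.factorial (2*k) : ℝ) * ((2*k : ℕ):ℝ)^(2*p+5))))) *
    (Stirling.stirlingSeq (6*k) * Stirling.stirlingSeq k /
      (Stirling.stirlingSeq (3*k) * Stirling.stirlingSeq (2*k) * Stirling.stirlingSeq (2*k))) *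
    ((((2*k+6 : ℕ):ℝ)/((2*k : ℕ):ℝ))^((5:ℝ)/2)) * Real.sqrt Real.pi) atTop
      (nhds ((1*1/(1*1*1)) * (Real.sqrt Real.pi * Real.sqrt Real.pi /
        (Real.sqrt Real.pi * Real.sqrt Real.pi * Real.sqrt Real.pi)) * 1 * Real.sqrt Real.pi)) := by
      refine Tendsto.mul_const _ (Tendsto.mul (Tendsto.mul ?_ ?_) (tendsto_V 6 (by norm_num)))
      · exact Tendsto.div
          ((tendsto_u_comp (2*p+13) 6 (by norm_num)).mul (tendsto_u (p+2)))
          (((tendsto_u_comp (p+6) 3 (by norm_num)).mul (tendsto_u_comp 6 2 (by norm_num))).mul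
            (tendsto_u_comp (2*p+5) 2 (by norm_num))) (by norm_num)
      · exact Tendsto.div
          ((tendsto_st_comp 6 (by norm_num)).mul Stirling.tendsto_stirlingSeq_sqrt_pi)
          (((tendsto_st_comp 3 (by norm_num)).mul (tendsto_st_comp 2 (by norm_num))).mul
            (tendsto_st_comp 2 (by norm_num))) (by positivity)
    have hval : (1*1/(1*1*1)) * (Real.sqrt Real.pi * Real.sqrt Real.pi /
        (Real.sqrt Real.pi * Real.sqrt Real.pi * Real.sqrt Real.pi)) * 1 * Real.sqrt Real.pi
        = 1 := by field_simp
    rw [hval] at HE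
    refine Tendsto.congr' ?_ HE
    filter_upwards [eventually_ge_atTop 1] with k hk
    have h26 : 2*(k+3) = 2*k+6 := by omega
    simp only [h26]
    exact (key_even p k hp hk).symm
  · rw [← Filter.tendsto_add_atTop_iff_nat 3]
    have HO : Tendsto (fun k : ℕ =>
      ((Nat.factorial (3*k+(p+8)) : ℝ) / ((Nat.factorial (3*k) : ℝ) * ((3*k : ℕ):ℝ)^(p+8))
      / ((Nat.factorial (k+(p+3)) : ℝ) / ((Nat.factorial k : ℝ) * (k:ℝ)^(p+3))
        * ((Nat.factorial (2*k+7) : ℝ) / ((Nat.factorial (2*k) : ℝ) * ((2*k : ℕ):ℝ)^7)))) *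
    (Stirling.stirlingSeq (3*k) /
      (Stirling.stirlingSeq k * Stirling.stirlingSeq (2*k))) *
    ((((2*k+7 : ℕ):ℝ)/((2*k : ℕ):ℝ))^((5:ℝ)/2)) * Real.sqrt Real.pi) atTop
      (nhds ((1/(1*1)) * (Real.sqrt Real.pi /
        (Real.sqrt Real.pi * Real.sqrt Real.pi)) * 1 * Real.sqrt Real.pi)) := by
      refine Tendsto.mul_const _ (Tendsto.mul (Tendsto.mul ?_ ?_) (tendsto_V 7 (by norm_num)))
      · exact Tendsto.div (tendsto_u_comp (p+8) 3 (by norm_num))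
          ((tendsto_u (p+3)).mul (tendsto_u_comp 7 2 (by norm_num))) (by norm_num)
      · exact Tendsto.div (tendsto_st_comp 3 (by norm_num))
          (Stirling.tendsto_stirlingSeq_sqrt_pi.mul (tendsto_st_comp 2 (by norm_num)))
          (by positivity)
    have hval : (1/(1*1)) * (Real.sqrt Real.pi /
        (Real.sqrt Real.pi * Real.sqrt Real.pi)) * 1 * Real.sqrt Real.pi = 1 := by field_simp
    rw [hval] at HO
    refine Tendsto.congr' ?_ HO
    filter_upwards [eventually_ge_atTop 1] with k hk
    have h27 : 2*(k+3)+1 = 2*k+7 := by omega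
    simp only [h27]
    exact (key_odd p k hp hk).symm
end

section
/- Let h ∈ (0, 1/4], λ = h/(1+8h)^{3/2}. Then 1/√(1+8h) + 2(8 + 1/h)·W_λ(h/(1+8h)) = 1, where W_λ(x) = (λ/2)·((1 - ((1+8h)/h)x)·√(1-4(1+8h)x) - 1 + x/λ). -/
/-- the peeling transition probabilities of `H_λ` sum to `1`:
`1/√(1+8h) + 2(8+1/h) W_λ(h/(1+8h)) = 1`. -/
theorem stmt_5 (h : ℝ) (hh : h ∈ Set.Ioc (0 : ℝ) (1/4)) (lam : ℝ)
    (hlam : lam = h / (1 + 8*h) ^ ((3 : ℝ)/2)) (W : ℝ → ℝ)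
    (hW : ∀ x, W x =
      (lam / 2) * ((1 - ((1 + 8*h)/h) * x) * Real.sqrt (1 - 4*(1 + 8*h)*x) - 1 + x / lam)) :
    1 / Real.sqrt (1 + 8*h) + 2 * (8 + 1/h) * W (h / (1 + 8*h)) = 1 := by
  obtain ⟨h0, _⟩ := hh
  have hp : (0:ℝ) < 1 + 8*h := by linarith
  have hs : 0 < Real.sqrt (1 + 8*h) := Real.sqrt_pos.mpr hp
  have hpow : (1 + 8*h) ^ ((3:ℝ)/2) = (1 + 8*h) * Real.sqrt (1 + 8*h) := by
    rw [Real.sqrt_eq_rpow, show (3:ℝ)/2 = 1 + 1/2 by norm_num, Real.rpow_add hp,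
      Real.rpow_one]
  have hz : (1 - ((1 + 8*h)/h) * (h / (1 + 8*h))) = 0 := by
    field_simp
    norm_num
  rw [hW, hz, hlam, hpow, zero_mul]
  have hsq : Real.sqrt (1 + 8*h) * Real.sqrt (1 + 8*h) = 1 + 8*h :=
    Real.mul_self_sqrt hp.le
  field_simp
  ring_nf
end

section
/- Let h ∈ (0,1/4] and g(x) = 1/x - (1-x)(1-√(1-4hx))/(2hx^2) for x ∈ (0,1]. Then g extends continuously to x=0 with g(0) = 1 - h, g(1) = 1, g is the generating function of a probability distribution on nonnegative integers (i.e., g has nonnegative Taylor coefficients at 0 summing to 1), and g'(1) = (1 - 2h - √(1-4h))/(2h). -/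
open Set Filter Finset

lemma cat_rec (n : ℕ) : (n+2) * catalan (n+1) = (4*n+2) * catalan n := by
  have h1 := Nat.succ_mul_centralBinom_succ n
  have h2 := succ_mul_catalan_eq_centralBinom n
  have h3 := succ_mul_catalan_eq_centralBinom (n+1)
  have key : (n+1) * ((n+2) * catalan (n+1)) = (n+1) * ((4*n+2) * catalan n) := by
    calc (n+1) * ((n+2) * catalan (n+1)) = (n+1) * Nat.centralBinom (n+1) := by
          rw [← h3]
      _ = 2 * (2*n+1) * Nat.centralBinom n := h1
      _ = 2 * (2*n+1) * ((n+1) * catalan n) := by rw [h2]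
      _ = (n+1) * ((4*n+2) * catalan n) := by ring
  exact Nat.eq_of_mul_eq_mul_left (Nat.succ_pos n) key

lemma cat_succ_le (n : ℕ) : catalan (n+1) ≤ 4 * catalan n := by
  have h := cat_rec n
  have : (n+2) * catalan (n+1) ≤ (n+2) * (4 * catalan n) := by
    rw [h]; nlinarith [Nat.zero_le (catalan n)]
  exact Nat.le_of_mul_le_mul_left this (by omega)

lemma cauchy_partial (a : ℕ → ℝ) (ha : ∀ i, 0 ≤ a i) (N : ℕ) :
    ∑ n ∈ range N, ∑ i ∈ range (n+1), a i * a (n-i)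
      ≤ (∑ i ∈ range N, a i)^2 := by
  rw [sq, Finset.sum_mul_sum]
  have heq : ∑ n ∈ range N, ∑ i ∈ range (n+1), a i * a (n-i)
      = ∑ p ∈ (range N ×ˢ range N).filter (fun p => p.1 + p.2 < N), a p.1 * a p.2 := by
    rw [Finset.sum_sigma']
    refine Finset.sum_nbij' (fun p => (p.2, p.1 - p.2)) (fun q => ⟨q.1 + q.2, q.1⟩) ?_ ?_ ?_ ?_ ?_
    · rintro ⟨n, i⟩ hp
      simp only [Finset.mem_sigma, Finset.mem_range] at hp
      simp only [Finset.mem_filter, Finset.mem_product, Finset.mem_range]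
      omega
    · rintro ⟨i, j⟩ hq
      simp only [Finset.mem_filter, Finset.mem_product, Finset.mem_range] at hq
      simp only [Finset.mem_sigma, Finset.mem_range]
      omega
    · rintro ⟨n, i⟩ hp
      simp only [Finset.mem_sigma, Finset.mem_range] at hp
      have hni : i + (n - i) = n := by omega
      simp only [hni]
    · rintro ⟨i, j⟩ hq
      simp only [Finset.mem_filter, Finset.mem_product, Finset.mem_range] at hq
      simp only [Prod.mk.injEq]
      exact ⟨trivial, by omega⟩
    · rintro ⟨n, i⟩ hp; rfl
  rw [heq, ← Finset.sum_product']
  exact Finset.sum_le_sum_of_subset_of_nonneg (Finset.filter_subset _ _)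
    (fun p _ _ => mul_nonneg (ha _) (ha _))

lemma catalanGF {z : ℝ} (h0 : 0 < z) (h4 : z ≤ 1/4) :
    HasSum (fun n => (catalan n : ℝ) * z^n) ((1 - Real.sqrt (1 - 4*z)) / (2*z)) := by
  set s := Real.sqrt (1 - 4*z) with hs_def
  have hs0 : 0 ≤ s := Real.sqrt_nonneg _
  have hs2 : s^2 = 1 - 4*z := Real.sq_sqrt (by linarith)
  have hs1 : s ≤ 1 := by nlinarith
  set r := (1 - s)/(2*z) with hr_def
  have hzne : (2*z) ≠ 0 := by positivity
  have hr : z * r^2 + 1 = r := by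
    rw [hr_def]; field_simp; nlinarith [hs2]
  have hr1 : 1 ≤ r := by
    rw [hr_def, le_div_iff₀ (by linarith)]
    nlinarith [hs2]
  set a : ℕ → ℝ := fun n => (catalan n : ℝ) * z^n with ha_def
  have apos : ∀ n, 0 ≤ a n := fun n => mul_nonneg (Nat.cast_nonneg _) (pow_nonneg h0.le _)
  -- convolution identity
  have conv : ∀ n : ℕ, ∑ i ∈ Finset.range (n+1), a i * a (n-i) = (catalan (n+1) : ℝ) * z^n := by
    intro n
    have hcat : catalan (n+1) = ∑ i ∈ Finset.range (n+1), catalan i * catalan (n-i) := by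
      rw [catalan_succ']
      rw [Finset.Nat.sum_antidiagonal_eq_sum_range_succ_mk]
    rw [hcat]
    push_cast
    rw [Finset.sum_mul]
    refine Finset.sum_congr rfl fun i hi => ?_
    have hin : i ≤ n := Nat.lt_succ_iff.mp (Finset.mem_range.mp hi)
    have : z^i * z^(n-i) = z^n := by rw [← pow_add]; congr 1; omega
    simp only [ha_def]
    calc (catalan i : ℝ) * z^i * ((catalan (n-i):ℝ) * z^(n-i))
        = (catalan i : ℝ) * (catalan (n-i):ℝ) * (z^i * z^(n-i)) := by ring
      _ = (catalan i : ℝ) * (catalan (n-i):ℝ) * z^n := by rw [this]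
  have hpart : ∀ N, ∑ n ∈ Finset.range N, a n ≤ r := by
    intro N
    induction N with
    | zero => simp; linarith
    | succ N ih =>
      rw [Finset.sum_range_succ']
      have h0' : a 0 = 1 := by simp [ha_def]
      have hstep : ∀ n, a (n+1) = z * ∑ i ∈ Finset.range (n+1), a i * a (n-i) := by
        intro n; rw [conv n, ha_def]; simp only []; rw [pow_succ]; ring
      calc (∑ n ∈ Finset.range N, a (n+1)) + a 0
          = z * (∑ n ∈ Finset.range N, ∑ i ∈ Finset.range (n+1), a i * a (n-i)) + 1 := by
            rw [h0', Finset.mul_sum]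
            congr 1
            exact Finset.sum_congr rfl fun n _ => hstep n
        _ ≤ z * (∑ n ∈ Finset.range N, a n)^2 + 1 := by
            have := cauchy_partial a apos N
            nlinarith [h0.le]
        _ ≤ z * r^2 + 1 := by
            have hnn : 0 ≤ ∑ n ∈ Finset.range N, a n :=
              Finset.sum_nonneg fun n _ => apos n
            have hp2 : (∑ n ∈ Finset.range N, a n)^2 ≤ r^2 := pow_le_pow_left₀ hnn ih 2
            nlinarith [h0.le]
        _ = r := hr
  have hsum : Summable a := summable_of_sum_range_le apos hpart
  set L := ∑' n, a n with hL_def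
  have hLr : L ≤ r := Real.tsum_le_of_sum_range_le apos hpart
  have hnorm : Summable (fun n => ‖a n‖) := by
    refine hsum.congr fun n => ?_
    rw [Real.norm_of_nonneg (apos n)]
  have hcp := tsum_mul_tsum_eq_tsum_sum_range_of_summable_norm hnorm hnorm
  have hconv_tsum : ∑' n, ∑ k ∈ Finset.range (n+1), a k * a (n-k) = L * L := hcp.symm
  have hshift : L = 1 + z * (L * L) := by
    have hsum1 : Summable (fun n => a (n+1)) := (summable_nat_add_iff 1).mpr hsum
    have h1 : L = a 0 + ∑' n, a (n+1) := hsum.tsum_eq_zero_add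
    have h2 : ∑' n, a (n+1) = z * ∑' n, ∑ k ∈ Finset.range (n+1), a k * a (n-k) := by
      rw [← tsum_mul_left]
      refine tsum_congr fun n => ?_
      rw [conv n, ha_def]; simp only []; rw [pow_succ]; ring
    have ha0 : a 0 = 1 := by simp [ha_def]
    calc L = a 0 + ∑' n, a (n+1) := h1
      _ = 1 + z * (L * L) := by rw [ha0, h2, hconv_tsum]
  have hfact : (L - r) * (z*(L + r) - 1) = 0 := by nlinarith [hshift, hr]
  have hLeq : L = r := by
    rcases mul_eq_zero.mp hfact with h' | h'
    · linarith
    · -- z(L+r) = 1 with L ≤ r gives 1 ≤ 2zr = 1 - s, so s ≤ 0, s = 0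
      have h2zr : 2*z*r = 1 - s := by rw [hr_def]; field_simp
      have hs_le : s ≤ 0 := by nlinarith
      have hs_eq : s = 0 := le_antisymm hs_le hs0
      -- then r = 1/(2z) and z(L+r)=1 forces L = r
      nlinarith [hr]
  rw [← hLeq]
  exact hsum.hasSum

/-- `g(x) = 1/x - (1-x)(1-√(1-4hx))/(2hx²)` extends continuously to `0`
with value `1-h`, satisfies `g(1)=1`, is the generating function of a probability
distribution on ℕ, and has (one-sided) derivative `(1-2h-√(1-4h))/(2h)` at `1`. -/
theorem stmt_6 (h : ℝ) (hh : h ∈ Set.Ioc (0 : ℝ) (1/4))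
    (g : ℝ → ℝ)
    (hg : ∀ x : ℝ, x ≠ 0 →
      g x = 1/x - (1 - x) * (1 - Real.sqrt (1 - 4*h*x)) / (2*h*x^2)) :
    (Filter.Tendsto g (nhdsWithin 0 (Set.Ioi 0)) (nhds (1 - h))) ∧
    g 1 = 1 ∧
    (∃ θ : ℕ → ℝ, (∀ i, 0 ≤ θ i) ∧ HasSum θ 1 ∧
      ∀ x ∈ Set.Ioc (0 : ℝ) 1, HasSum (fun i : ℕ => θ i * x ^ i) (g x)) ∧
    HasDerivWithinAt g ((1 - 2*h - Real.sqrt (1 - 4*h)) / (2*h)) (Set.Iic 1) 1 := by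
  obtain ⟨hh0, hh4⟩ := hh
  set G : ℝ → ℝ := fun x => (2*(1 + Real.sqrt (1 - 4*h*x)) - 4*h) / (1 + Real.sqrt (1 - 4*h*x))^2
    with hG_def
  -- g agrees with G where defined
  have hgG : ∀ x : ℝ, x ≠ 0 → 0 ≤ 1 - 4*h*x → g x = G x := by
    intro x hx h4x
    have key : ∀ s : ℝ, 0 ≤ s → s^2 = 1 - 4*h*x →
        1/x - (1 - x) * (1 - s) / (2*h*x^2) = (2*(1+s) - 4*h)/(1+s)^2 := by
      intro s hs0 hs2
      have h1s : (0:ℝ) < 1 + s := by linarith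
      field_simp
      linear_combination ((1-x)*(1+s) + 2*h*x) * hs2
    rw [hg x hx]
    simp only [hG_def]
    exact key _ (Real.sqrt_nonneg _) (Real.sq_sqrt h4x)
  -- g 1 = 1
  have hg1 : g 1 = 1 := by
    rw [hg 1 one_ne_zero]; norm_num
  -- Part 1: tendsto at 0+
  have hsqrt_cont : Continuous fun x : ℝ => Real.sqrt (1 - 4*h*x) :=
    Real.continuous_sqrt.comp (by continuity)
  have part1 : Filter.Tendsto g (nhdsWithin 0 (Set.Ioi 0)) (nhds (1 - h)) := by
    have hGc : ContinuousAt G 0 := by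
      apply ContinuousAt.div
      · exact ((continuous_const.mul (continuous_const.add hsqrt_cont)).sub
          continuous_const).continuousAt
      · exact (((continuous_const.add hsqrt_cont).pow 2)).continuousAt
      · norm_num [Real.sqrt_one]
    have hG0 : G 0 = 1 - h := by
      simp only [hG_def]
      rw [mul_zero, sub_zero, Real.sqrt_one]
      norm_num
      ring
    have hGt : Filter.Tendsto G (nhdsWithin 0 (Set.Ioi 0)) (nhds (1 - h)) := by
      rw [← hG0]
      exact hGc.continuousWithinAt.tendsto
    refine hGt.congr' ?_
    have hmem : Set.Ioo (0:ℝ) 1 ∈ nhdsWithin 0 (Set.Ioi 0) :=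
      Ioo_mem_nhdsGT_of_mem (by norm_num : (0:ℝ) ∈ Set.Ico 0 1)
    filter_upwards [hmem] with x hx
    exact (hgG x hx.1.ne' (by nlinarith [hx.1, hx.2])).symm
  -- Part 3: the distribution
  have hsum_x : ∀ x ∈ Set.Ioc (0 : ℝ) 1,
      HasSum (fun i : ℕ => ((catalan i : ℝ)*h^i - (catalan (i+1) : ℝ)*h^(i+1)) * x ^ i) (g x) := by
    rintro x ⟨hx0, hx1⟩
    have hz0 : 0 < h*x := mul_pos hh0 hx0
    have hz4 : h*x ≤ 1/4 := by nlinarith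
    have hS := catalanGF hz0 hz4
    set s := Real.sqrt (1 - 4*(h*x)) with hs_def
    set R := (1 - s) / (2*(h*x)) with hR_def
    have hS1 : HasSum (fun n => (catalan (n+1) : ℝ) * (h*x)^(n+1)) (R - 1) := by
      have := (hasSum_nat_add_iff' (f := fun n => (catalan n : ℝ) * (h*x)^n) 1).mpr hS
      simpa using this
    have hS2 : HasSum (fun n => (catalan (n+1) : ℝ) * (h*x)^(n+1) / x) ((R - 1)/x) :=
      hS1.div_const x
    have hfinal := hS.sub hS2
    have heqfun : ∀ i : ℕ, (catalan i : ℝ) * (h*x)^i - (catalan (i+1) : ℝ) * (h*x)^(i+1) / x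
        = ((catalan i : ℝ)*h^i - (catalan (i+1) : ℝ)*h^(i+1)) * x ^ i := by
      intro i
      rw [mul_pow, mul_pow]
      field_simp
      ring
    have hval : R - (R - 1)/x = g x := by
      rw [hg x hx0.ne', hR_def]
      have : Real.sqrt (1 - 4*h*x) = s := by rw [hs_def]; ring_nf
      rw [← this]
      field_simp
      ring
    rw [← hval]
    exact hfinal.congr_fun fun i => (heqfun i).symm
  have part3 : ∃ θ : ℕ → ℝ, (∀ i, 0 ≤ θ i) ∧ HasSum θ 1 ∧
      ∀ x ∈ Set.Ioc (0 : ℝ) 1, HasSum (fun i : ℕ => θ i * x ^ i) (g x) := by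
    refine ⟨fun i => (catalan i : ℝ)*h^i - (catalan (i+1) : ℝ)*h^(i+1), ?_, ?_, hsum_x⟩
    · intro i
      have hcle : (catalan (i+1) : ℝ) ≤ 4 * (catalan i : ℝ) := by
        exact_mod_cast cat_succ_le i
      have hp : (0:ℝ) ≤ h^i := pow_nonneg hh0.le i
      have h1 : (catalan (i+1) : ℝ) * h ≤ (catalan i : ℝ) := by nlinarith [Nat.cast_nonneg (α := ℝ) (catalan (i+1))]
      have : ((catalan i : ℝ) - (catalan (i+1) : ℝ) * h) * h^i ≥ 0 :=
        mul_nonneg (by linarith) hp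
      calc (0:ℝ) ≤ ((catalan i : ℝ) - (catalan (i+1) : ℝ) * h) * h^i := this
        _ = (catalan i : ℝ)*h^i - (catalan (i+1) : ℝ)*h^(i+1) := by rw [pow_succ]; ring
    · have := hsum_x 1 ⟨one_pos, le_refl 1⟩
      simpa [hg1] using this
  -- Part 4: derivative at 1 within Iic 1
  have part4 : HasDerivWithinAt g ((1 - 2*h - Real.sqrt (1 - 4*h)) / (2*h)) (Set.Iic 1) 1 := by
    rw [hasDerivWithinAt_iff_tendsto_slope]
    have hs10 : 0 ≤ Real.sqrt (1 - 4*h) := Real.sqrt_nonneg _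
    have hs12 : (Real.sqrt (1 - 4*h))^2 = 1 - 4*h := Real.sq_sqrt (by linarith)
    -- the limit function
    have hT : Filter.Tendsto (fun y : ℝ => 4*h/(1 + Real.sqrt (1 - 4*h*y))^2)
        (nhdsWithin 1 (Set.Iic 1 \ {1})) (nhds ((1 - 2*h - Real.sqrt (1 - 4*h)) / (2*h))) := by
      have hc : ContinuousAt (fun y : ℝ => 4*h/(1 + Real.sqrt (1 - 4*h*y))^2) 1 := by
        apply ContinuousAt.div
        · exact continuousAt_const
        · exact (((continuous_const.add hsqrt_cont).pow 2)).continuousAt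
        · have : 0 < (1 + Real.sqrt (1 - 4*h*1))^2 := by positivity
          exact this.ne'
      have hval : 4*h/(1 + Real.sqrt (1 - 4*h*1))^2 = (1 - 2*h - Real.sqrt (1 - 4*h)) / (2*h) := by
        rw [show (1:ℝ) - 4*h*1 = 1 - 4*h by ring]
        have h1s : (0:ℝ) < 1 + Real.sqrt (1 - 4*h) := by linarith
        field_simp
        linear_combination (Real.sqrt (1 - 4*h) + 1 + 2*h) * hs12
      rw [← hval]
      exact hc.continuousWithinAt.tendsto
    refine hT.congr' ?_
    have hmem : Set.Ioo (0:ℝ) 2 ∈ nhdsWithin 1 (Set.Iic 1 \ {1}) :=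
      nhdsWithin_le_nhds (Ioo_mem_nhds (by norm_num) (by norm_num))
    filter_upwards [hmem, self_mem_nhdsWithin] with y hy hy'
    obtain ⟨hy1, hyne⟩ := hy'
    have hy1' : y < 1 := lt_of_le_of_ne hy1 hyne
    have hy0 : 0 < y := hy.1
    have h4y : 0 ≤ 1 - 4*h*y := by nlinarith
    have hgy : g y = G y := hgG y hy0.ne' h4y
    have hg1' : g 1 = G 1 := hgG 1 one_ne_zero (by nlinarith)
    -- slope computation
    have hs0y : 0 ≤ Real.sqrt (1 - 4*h*y) := Real.sqrt_nonneg _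
    have hs2y : (Real.sqrt (1 - 4*h*y))^2 = 1 - 4*h*y := Real.sq_sqrt h4y
    have hGdiff : G y - G 1 = 4*h*(y - 1)/(1 + Real.sqrt (1 - 4*h*y))^2 := by
      have hG1 : G 1 = 1 := by
        rw [← hg1', hg1]
      rw [hG1]
      simp only [hG_def]
      have h1sy : (0:ℝ) < 1 + Real.sqrt (1 - 4*h*y) := by linarith
      field_simp
      linear_combination -hs2y
    rw [slope_def_field, hgy, hg1', hGdiff]
    have hy1ne : y - 1 ≠ 0 := sub_ne_zero.mpr hyne
    have h1sy : (0:ℝ) < 1 + Real.sqrt (1 - 4*h*y) := by positivity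
    field_simp
  exact ⟨part1, hg1, part3, part4⟩
end
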